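/- arXiv:2207.05089 — 2 statements merged into one kernel-verified Lean document; each statement's English description precedes it below -/
import Mathlib

section
/- Let U be a unitary operator on ℂ² ⊗ ℂ² that commutes both with the swap operator (which exchanges the two tensor factors) and with X ⊗ X. Then ⟨00| U† (Z⊗Z) U |00⟩ + ⟨01| U† (Z⊗Z) U |01⟩ = 0, where |00⟩ and |01⟩ are the computational basis states with Z-eigenvalues (+1,+1) and (+1,−1) respectively. Equivalently, any improvement on the unsatisfied MaxCut edge string is exactly matched by a degradation on the satisfied string. -/
/-!
STATEMENT 13: On the decoupled two-qubit MaxCut edge, any unitary commuting with the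
swap operator and with `X⊗X` satisfies
`⟨00|U†(Z⊗Z)U|00⟩ + ⟨01|U†(Z⊗Z)U|01⟩ = 0`.
The basis of `ℂ²⊗ℂ² ≅ ℂ^{Bool × Bool}` is indexed by pairs of bits, `false` carrying
`Z`-eigenvalue `+1` and `true` carrying `Z`-eigenvalue `−1`, so `|00⟩ = (false, false)`
and `|01⟩ = (false, true)`.
-/

open scoped Matrix

/-- The `±1` value of a bit. -/
noncomputable def sgn (b : Bool) : ℝ := if b then -1 else 1

/-- The operator `Z ⊗ Z` on two qubits. -/
noncomputable def ZZ : Matrix (Bool × Bool) (Bool × Bool) ℂ :=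
  Matrix.diagonal fun z => (sgn z.1 * sgn z.2 : ℝ)

/-- The operator `X ⊗ X` on two qubits. -/
noncomputable def XX : Matrix (Bool × Bool) (Bool × Bool) ℂ :=
  Matrix.of fun z z' => if z' = (!z.1, !z.2) then 1 else 0

/-- The swap operator on two qubits, sending `u ⊗ v` to `v ⊗ u`. -/
noncomputable def swapOp : Matrix (Bool × Bool) (Bool × Bool) ℂ :=
  Matrix.of fun z z' => if z' = (z.2, z.1) then 1 else 0

lemma XX_herm : XXᴴ = XX := by
  ext ⟨a,b⟩ ⟨c,d⟩
  cases a <;> cases b <;> cases c <;> cases d <;>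
    simp [XX, Matrix.conjTranspose_apply]

lemma swap_herm : swapOpᴴ = swapOp := by
  ext ⟨a,b⟩ ⟨c,d⟩
  cases a <;> cases b <;> cases c <;> cases d <;>
    simp [swapOp, Matrix.conjTranspose_apply]

lemma XX_XX : XX * XX = 1 := by
  ext ⟨a,b⟩ ⟨c,d⟩
  cases a <;> cases b <;> cases c <;> cases d <;>
    simp [XX, Matrix.mul_apply, Fintype.sum_prod_type, Matrix.one_apply]

lemma swap_swap : swapOp * swapOp = 1 := by
  ext ⟨a,b⟩ ⟨c,d⟩
  cases a <;> cases b <;> cases c <;> cases d <;>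
    simp [swapOp, Matrix.mul_apply, Fintype.sum_prod_type, Matrix.one_apply]

lemma XX_ZZ_comm : XX * ZZ = ZZ * XX := by
  ext ⟨a,b⟩ ⟨c,d⟩
  cases a <;> cases b <;> cases c <;> cases d <;>
    simp [XX, ZZ, sgn, Matrix.mul_apply, Fintype.sum_prod_type, Matrix.diagonal]

lemma swap_ZZ_comm : swapOp * ZZ = ZZ * swapOp := by
  ext ⟨a,b⟩ ⟨c,d⟩
  cases a <;> cases b <;> cases c <;> cases d <;>
    simp [swapOp, ZZ, sgn, Matrix.mul_apply, Fintype.sum_prod_type, Matrix.diagonal, mul_comm]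

lemma trace_ZZ : Matrix.trace ZZ = 0 := by
  simp [Matrix.trace, ZZ, sgn, Fintype.sum_prod_type, Matrix.diagonal]

private lemma comm_shift {A B : Matrix (Bool × Bool) (Bool × Bool) ℂ} (h : A * B = B * A)
    (C : Matrix (Bool × Bool) (Bool × Bool) ℂ) : A * (B * C) = B * (A * C) := by
  rw [← Matrix.mul_assoc, h, Matrix.mul_assoc]

theorem stmt13 (U : Matrix (Bool × Bool) (Bool × Bool) ℂ)
    (hU : U ∈ Matrix.unitaryGroup (Bool × Bool) ℂ)
    (hswap : U * swapOp = swapOp * U)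
    (hXX : U * XX = XX * U) :
    (Uᴴ * ZZ * U) (false, false) (false, false)
      + (Uᴴ * ZZ * U) (false, true) (false, true) = 0 := by
  set M := Uᴴ * ZZ * U with hMdef
  have hUU : U * Uᴴ = 1 := hU.2
  have hUc : Uᴴ * XX = XX * Uᴴ := by
    have h := congrArg Matrix.conjTranspose hXX
    simpa [Matrix.conjTranspose_mul, XX_herm] using h.symm
  have hUcs : Uᴴ * swapOp = swapOp * Uᴴ := by
    have h := congrArg Matrix.conjTranspose hswap
    simpa [Matrix.conjTranspose_mul, swap_herm] using h.symm
  have hMX : XX * (M * XX) = M := by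
    rw [hMdef]
    simp only [Matrix.mul_assoc]
    rw [comm_shift hUc.symm, comm_shift XX_ZZ_comm, comm_shift hXX.symm,
      XX_XX, Matrix.mul_one]
  have hMS : swapOp * (M * swapOp) = M := by
    rw [hMdef]
    simp only [Matrix.mul_assoc]
    rw [comm_shift hUcs.symm, comm_shift swap_ZZ_comm, comm_shift hswap.symm,
      swap_swap, Matrix.mul_one]
  have e1 : M (true, true) (true, true) = M (false, false) (false, false) := by
    have h := congrFun (congrFun (congrArg (fun A => A) hMX) (false, false)) (false, false)
    simpa [Matrix.mul_apply, XX, Fintype.sum_prod_type] using h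
  have e2 : M (true, false) (true, false) = M (false, true) (false, true) := by
    have h := congrFun (congrFun (congrArg (fun A => A) hMS) (false, true)) (false, true)
    simpa [Matrix.mul_apply, swapOp, Fintype.sum_prod_type] using h
  have htr : Matrix.trace M = 0 := by
    rw [hMdef, Matrix.trace_mul_comm, ← Matrix.mul_assoc, hUU, Matrix.one_mul, trace_ZZ]
  have h := htr
  simp [Matrix.trace, Matrix.diag, Fintype.sum_prod_type] at h
  rw [e1, e2] at h
  linear_combination h / 2
end

section
/- Let G = (V,E) be a d-regular graph on n vertices, and on the n-qubit Hilbert space define the Maximum Independent Set cost operator Ĉ = Σ_{i∈V} b̂_i − Σ_{⟨i,j⟩∈E} b̂_i b̂_j, where b̂_i = (I − Z_i)/2, and the mixing operator B = Σ_{i=1}^n X_i. Then for every string w ∈ {0,1}ⁿ and every β ∈ ℝ, ⟨w| e^{iβB} Ĉ e^{−iβB} |w⟩ = W(w) − K(w) + (d/2)(4W(w) − n) sin⁴β + (n − W(w)(d+2)) sin²β + K(w) sin²(2β), where W(w) = Σ_i w_i and K(w) = Σ_{⟨i,j⟩∈E} w_i w_j. -/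
/-!
STATEMENT 17: Exact expectation of the Maximum Independent Set cost operator after the
`p = 1/2` QAOA on a `d`-regular graph:
`⟨w|e^{iβB} Ĉ e^{−iβB}|w⟩
  = W − K + (d/2)(4W−n)sin⁴β + (n − W(d+2))sin²β + K sin²(2β)`.
Basis states are labeled by `w ∈ {0,1}ⁿ` (encoded as `Fin n → Bool`, `true ↦ 1`),
and `b̂_i = (I − Z_i)/2` satisfies `b̂_i|w⟩ = w_i|w⟩`.
-/

open scoped Matrix

/-- The type of `n`-bit strings `{0,1}ⁿ`. -/
abbrev Str (n : ℕ) := Fin n → Bool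

/-- The `{0,1}` value of a bit. -/
noncomputable def bitval (b : Bool) : ℝ := if b then 1 else 0

/-- Matrices on the `n`-qubit Hilbert space `ℂ^(2^n)`. -/
abbrev Mat (n : ℕ) := Matrix (Str n) (Str n) ℂ

/-- The Pauli `Z` operator on qubit `i` (eigenvalue `+1` on bit `0`, `−1` on bit `1`). -/
noncomputable def PauliZ (n : ℕ) (i : Fin n) : Mat n :=
  Matrix.diagonal fun z => (1 - 2 * bitval (z i) : ℝ)

/-- The occupation operator `b̂_i = (I − Z_i)/2`. -/
noncomputable def bhat (n : ℕ) (i : Fin n) : Mat n :=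
  (2 : ℂ)⁻¹ • ((1 : Mat n) - PauliZ n i)

lemma bhat_eq_diagonal (n : ℕ) (i : Fin n) :
    bhat n i = Matrix.diagonal fun z => (bitval (z i) : ℂ) := by
  ext z z'
  simp only [bhat, Matrix.smul_apply, Matrix.sub_apply, PauliZ, Matrix.diagonal_apply,
    Matrix.one_apply, smul_eq_mul, bitval]
  by_cases h : z = z'
  · subst h
    rcases Bool.eq_false_or_eq_true (z i) with hb | hb <;> simp [hb]
  · simp [h]

lemma bhat_comm (n : ℕ) (i j : Fin n) : bhat n i * bhat n j = bhat n j * bhat n i := by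
  rw [bhat_eq_diagonal, bhat_eq_diagonal, Matrix.diagonal_mul_diagonal,
    Matrix.diagonal_mul_diagonal]
  simp [mul_comm]

/-- The Pauli `X` operator on qubit `i`. -/
noncomputable def PauliX (n : ℕ) (i : Fin n) : Mat n :=
  Matrix.of fun z z' => if z' = Function.update z i (!z i) then 1 else 0

/-- The mixing operator `B = Σᵢ Xᵢ`. -/
noncomputable def mixer (n : ℕ) : Mat n := ∑ i, PauliX n i

/-- Matrix exponential. -/
noncomputable def mexp {ι : Type*} [Fintype ι] [DecidableEq ι] (A : Matrix ι ι ℂ) : Matrix ι ι ℂ :=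
  NormedSpace.exp A

/-- The Maximum Independent Set cost operator `Ĉ = Σᵢ b̂_i − Σ_{⟨i,j⟩∈E} b̂_i b̂_j`. -/
noncomputable def MISop (n : ℕ) (G : SimpleGraph (Fin n)) [DecidableRel G.Adj] : Mat n :=
  ∑ i, bhat n i -
    ∑ e ∈ G.edgeFinset,
      Sym2.lift ⟨fun i j => bhat n i * bhat n j, fun i j => bhat_comm n i j⟩ e

/-- The Hamming weight `W(w) = Σᵢ wᵢ`. -/
noncomputable def Wgt (n : ℕ) (w : Str n) : ℝ := ∑ i, bitval (w i)

/-- The number of violated edges `K(w) = Σ_{⟨i,j⟩∈E} wᵢ wⱼ`. -/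
noncomputable def Kviol (n : ℕ) (G : SimpleGraph (Fin n)) [DecidableRel G.Adj]
    (w : Str n) : ℝ :=
  ∑ e ∈ G.edgeFinset,
    Sym2.lift ⟨fun i j => bitval (w i) * bitval (w j), fun i j => by ring⟩ e


/-! ### Auxiliary lemmas -/

lemma pauliX_mul_apply (n : ℕ) (i : Fin n) (M : Mat n) (z z' : Str n) :
    (PauliX n i * M) z z' = M (Function.update z i (!z i)) z' := by
  rw [Matrix.mul_apply]
  rw [Finset.sum_eq_single (Function.update z i (!z i))]
  · simp [PauliX]
  · intro y _ hy; simp [PauliX, Ne.symm hy, hy]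
  · simp

lemma pauliX_sq (n : ℕ) (i : Fin n) : PauliX n i * PauliX n i = 1 := by
  ext z z'
  rw [pauliX_mul_apply]
  simp only [PauliX, Matrix.of_apply, Function.update_self, Bool.not_not, Function.update_idem,
    Function.update_eq_self, Matrix.one_apply]
  exact if_congr eq_comm rfl rfl

lemma pauliX_comm (n : ℕ) (i j : Fin n) : Commute (PauliX n i) (PauliX n j) := by
  rcases eq_or_ne i j with rfl | hij
  · exact Commute.refl _
  · show _ = _
    ext z z'
    rw [pauliX_mul_apply, pauliX_mul_apply]
    simp only [PauliX, Matrix.of_apply, Function.update_of_ne hij, Function.update_of_ne hij.symm]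
    rw [Function.update_comm hij]

/-- exp of `(I*b) • X` for an involution `X`. -/
lemma exp_I_smul_invol {n : ℕ} (X : Mat n) (hX : X * X = 1) (b : ℝ) :
    NormedSpace.exp ((Complex.I * b) • X)
      = (Real.cos b : ℂ) • (1 : Mat n) + (Complex.I * Real.sin b) • X := by
  rw [NormedSpace.exp_eq_tsum ℂ]
  refine HasSum.tsum_eq ?_
  have hsq : X ^ 2 = 1 := by rw [sq, hX]
  have heven : ∀ k : ℕ, X ^ (2 * k) = 1 := fun k => by rw [pow_mul, hsq, one_pow]
  have hodd : ∀ k : ℕ, X ^ (2 * k + 1) = X := fun k => by rw [pow_succ, heven, one_mul]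
  refine HasSum.even_add_odd ?_ ?_
  · have h := (Complex.hasSum_cos (b : ℂ)).smul_const (1 : Mat n)
    rw [← Complex.ofReal_cos] at h
    convert h using 2 with k
    case e'_3 => rfl
    rw [smul_pow, heven, smul_smul]
    congr 1
    rw [mul_pow, pow_mul, pow_mul, Complex.I_sq]
    field_simp
  · have h := ((Complex.hasSum_sin (b : ℂ)).mul_left Complex.I).smul_const X
    rw [← Complex.ofReal_sin] at h
    convert h using 2 with k
    case e'_3 => rfl
    rw [smul_pow, hodd, smul_smul]
    congr 1
    rw [mul_pow, pow_succ, pow_mul, Complex.I_sq]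
    field_simp

noncomputable def ub (c s : ℂ) (a b : Bool) : ℂ := if a = b then c else s

noncomputable def UentS (n : ℕ) (c s : ℂ) (S : Finset (Fin n)) : Mat n :=
  Matrix.of fun z z' =>
    if ∀ i ∉ S, z i = z' i then ∏ i ∈ S, ub c s (z i) (z' i) else 0

lemma noncommProd_eq_UentS (n : ℕ) (c s : ℂ) (S : Finset (Fin n)) (h) :
    S.noncommProd (fun i => c • (1 : Mat n) + s • PauliX n i) h = UentS n c s S := by
  induction S using Finset.induction with
  | empty =>
    rw [Finset.noncommProd_empty]
    ext z z'
    simp only [UentS, Matrix.of_apply, Finset.notMem_empty, Finset.prod_empty]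
    by_cases hzz : z = z'
    · subst hzz; simp
    · rw [Matrix.one_apply_ne hzz, if_neg]
      intro hall
      exact hzz (funext fun i => hall i (by simp))
  | @insert j S hj ih =>
    rw [Finset.noncommProd_insert_of_notMem _ _ _ _ hj, ih]
    ext z z'
    have hP' : ∏ i ∈ S, ub c s (Function.update z j (!z j) i) (z' i)
        = ∏ i ∈ S, ub c s (z i) (z' i) := by
      refine Finset.prod_congr rfl fun i hi => ?_
      rw [Function.update_of_ne (by rintro rfl; exact hj hi)]
    rw [Matrix.add_mul, Matrix.smul_mul, Matrix.smul_mul, Matrix.one_mul, Matrix.add_apply,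
      Matrix.smul_apply, Matrix.smul_apply, pauliX_mul_apply]
    simp only [UentS, Matrix.of_apply, smul_eq_mul, Finset.prod_insert hj, hP']
    by_cases h3 : ∀ i ∉ insert j S, z i = z' i
    · by_cases hjz : z j = z' j
      · have hC1 : ∀ i ∉ S, z i = z' i := by
          intro i hi
          rcases eq_or_ne i j with rfl | hij
          · exact hjz
          · exact h3 i (by simp [hij, hi])
        have hC2 : ¬ ∀ i ∉ S, Function.update z j (!z j) i = z' i := by
          intro hall
          have := hall j hj
          rw [Function.update_self] at this
          rw [← this] at hjz
          simp at hjz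
        rw [if_pos hC1, if_neg hC2, if_pos h3, ub, if_pos hjz]
        ring
      · have hC1 : ¬ ∀ i ∉ S, z i = z' i := fun hall => hjz (hall j hj)
        have hC2 : ∀ i ∉ S, Function.update z j (!z j) i = z' i := by
          intro i hi
          rcases eq_or_ne i j with rfl | hij
          · rw [Function.update_self]
            cases hz1 : z i <;> cases hz2 : z' i <;> simp_all
          · rw [Function.update_of_ne hij]
            exact h3 i (by simp [hij, hi])
        rw [if_neg hC1, if_pos hC2, if_pos h3, ub, if_neg hjz]
        ring
    · push_neg at h3
      obtain ⟨i, hiS, hine⟩ := h3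
      have hij : i ≠ j := fun hij => by simp [hij] at hiS
      have hiS' : i ∉ S := fun h => hiS (by simp [h])
      have hC1 : ¬ ∀ i ∉ S, z i = z' i := fun hall => hine (hall i hiS')
      have hC2 : ¬ ∀ i' ∉ S, Function.update z j (!z j) i' = z' i' := by
        intro hall
        have := hall i hiS'
        rw [Function.update_of_ne hij] at this
        exact hine this
      rw [if_neg hC1, if_neg hC2, if_neg]
      · ring
      · push_neg
        exact ⟨i, hiS, hine⟩

lemma mexp_mixer (n : ℕ) (b : ℝ) :
    mexp ((Complex.I * b) • mixer n)
      = Matrix.of fun z z' => ∏ i, ub (Real.cos b : ℂ) (Complex.I * Real.sin b) (z i) (z' i) := by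
  rw [mexp, mixer, Finset.smul_sum, Matrix.exp_sum_of_commute]
  · refine (Finset.noncommProd_congr rfl
      (fun i _ => exp_I_smul_invol (PauliX n i) (pauliX_sq n i) b)
      (fun x hx y hy hne =>
        ((((pauliX_comm n x y).smul_left (Complex.I * (b:ℂ))).smul_right
          (Complex.I * (b:ℂ))).exp))).trans ?_
    refine (noncommProd_eq_UentS _ _ _ _ _).trans ?_
    ext z z'
    simp [UentS]
  · intro x _ y _ _
    exact ((pauliX_comm n x y).smul_left (Complex.I * (b:ℂ))).smul_right (Complex.I * (b:ℂ))

lemma MISop_eq_diagonal (n : ℕ) (G : SimpleGraph (Fin n)) [DecidableRel G.Adj] :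
    MISop n G = Matrix.diagonal fun z => ((Wgt n z - Kviol n G z : ℝ) : ℂ) := by
  have h1 : ∑ i, bhat n i = Matrix.diagonal fun z => ((Wgt n z : ℝ) : ℂ) := by
    ext z z'
    simp only [Matrix.sum_apply, bhat_eq_diagonal, Matrix.diagonal_apply, Wgt]
    by_cases h : z = z'
    · subst h; simp
    · simp [h]
  have h2 : ∑ e ∈ G.edgeFinset,
      Sym2.lift ⟨fun i j => bhat n i * bhat n j, fun i j => bhat_comm n i j⟩ e
      = Matrix.diagonal fun z => ((Kviol n G z : ℝ) : ℂ) := by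
    have he : ∀ e ∈ G.edgeFinset,
        Sym2.lift ⟨fun i j => bhat n i * bhat n j, fun i j => bhat_comm n i j⟩ e
        = Matrix.diagonal fun z =>
            ((Sym2.lift ⟨fun i j => bitval (z i) * bitval (z j), fun i j => by ring⟩ e : ℝ) : ℂ) := by
      intro e _
      refine Sym2.inductionOn e fun i j => ?_
      simp only [Sym2.lift_mk, bhat_eq_diagonal, Matrix.diagonal_mul_diagonal]
      congr 1 with z
      push_cast
      ring
    rw [Finset.sum_congr rfl he]
    ext z z'
    simp only [Matrix.sum_apply, Matrix.diagonal_apply, Kviol]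
    by_cases h : z = z'
    · subst h; simp
    · simp [h]
  rw [MISop, h1, h2, Matrix.diagonal_sub]
  congr 1 with z
  push_cast
  ring

lemma sum_prod_bool {n : ℕ} (f : Fin n → Bool → ℂ) :
    ∑ z : Str n, ∏ i, f i (z i) = ∏ i, (f i true + f i false) := by
  classical
  have := Finset.prod_univ_sum (fun _ : Fin n => (Finset.univ : Finset Bool)) (fun i b => f i b)
  rw [Fintype.piFinset_univ] at this
  rw [← this]
  refine Finset.prod_congr rfl fun i _ => ?_
  simp

lemma sum_bit_prod {n : ℕ} (p : Fin n → Bool → ℂ)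
    (hsum : ∀ i, p i true + p i false = 1) (i₀ : Fin n) :
    ∑ z : Str n, ((bitval (z i₀) : ℝ) : ℂ) * ∏ i, p i (z i) = p i₀ true := by
  have hz : ∀ z : Str n, ((bitval (z i₀) : ℝ) : ℂ) * ∏ i, p i (z i)
      = ∏ i, ((if i = i₀ then ((bitval (z i) : ℝ) : ℂ) else 1) * p i (z i)) := by
    intro z
    rw [Finset.prod_mul_distrib, Finset.prod_ite_eq' Finset.univ i₀
      (fun i => ((bitval (z i) : ℝ) : ℂ))]
    simp
  simp_rw [hz]
  rw [sum_prod_bool (fun i b => (if i = i₀ then ((bitval b : ℝ) : ℂ) else 1) * p i b)]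
  have h2 : ∀ i : Fin n,
      (if i = i₀ then ((bitval true : ℝ) : ℂ) else 1) * p i true
        + (if i = i₀ then ((bitval false : ℝ) : ℂ) else 1) * p i false
      = if i = i₀ then p i₀ true else 1 := by
    intro i
    rcases eq_or_ne i i₀ with rfl | h
    · simp [bitval]
    · simp [h, hsum i]
  simp_rw [h2]
  rw [Finset.prod_ite_eq' Finset.univ i₀ (fun _ => p i₀ true)]
  simp

lemma sum_bit2_prod {n : ℕ} (p : Fin n → Bool → ℂ)
    (hsum : ∀ i, p i true + p i false = 1) (i₀ j₀ : Fin n) (hne : i₀ ≠ j₀) :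
    ∑ z : Str n, ((bitval (z i₀) : ℝ) : ℂ) * ((bitval (z j₀) : ℝ) : ℂ) * ∏ i, p i (z i)
      = p i₀ true * p j₀ true := by
  have hz : ∀ z : Str n,
      ((bitval (z i₀) : ℝ) : ℂ) * ((bitval (z j₀) : ℝ) : ℂ) * ∏ i, p i (z i)
      = ∏ i, ((if i = i₀ then ((bitval (z i) : ℝ) : ℂ) else 1)
          * (if i = j₀ then ((bitval (z i) : ℝ) : ℂ) else 1) * p i (z i)) := by
    intro z
    rw [Finset.prod_mul_distrib, Finset.prod_mul_distrib,
      Finset.prod_ite_eq' Finset.univ i₀ (fun i => ((bitval (z i) : ℝ) : ℂ)),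
      Finset.prod_ite_eq' Finset.univ j₀ (fun i => ((bitval (z i) : ℝ) : ℂ))]
    simp
  simp_rw [hz]
  rw [sum_prod_bool (fun i b => (if i = i₀ then ((bitval b : ℝ) : ℂ) else 1)
    * (if i = j₀ then ((bitval b : ℝ) : ℂ) else 1) * p i b)]
  have h2 : ∀ i : Fin n,
      (if i = i₀ then ((bitval true : ℝ) : ℂ) else 1)
          * (if i = j₀ then ((bitval true : ℝ) : ℂ) else 1) * p i true
        + (if i = i₀ then ((bitval false : ℝ) : ℂ) else 1)
          * (if i = j₀ then ((bitval false : ℝ) : ℂ) else 1) * p i false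
      = (if i = i₀ then p i₀ true else 1) * (if i = j₀ then p j₀ true else 1) := by
    intro i
    rcases eq_or_ne i i₀ with rfl | h
    · simp [bitval, Ne.symm, hne]
    · rcases eq_or_ne i j₀ with rfl | h'
      · simp [bitval, h]
      · simp [h, h', hsum i]
  simp_rw [h2]
  rw [Finset.prod_mul_distrib,
    Finset.prod_ite_eq' Finset.univ i₀ (fun _ => p i₀ true),
    Finset.prod_ite_eq' Finset.univ j₀ (fun _ => p j₀ true)]
  simp

lemma sum_edge_add {n : ℕ} (G : SimpleGraph (Fin n)) [DecidableRel G.Adj] (a : Fin n → ℝ) :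
    ∑ e ∈ G.edgeFinset, Sym2.lift ⟨fun i j => a i + a j, fun i j => by ring⟩ e
      = ∑ v, (G.degree v : ℝ) * a v := by
  classical
  have step1 : ∀ e ∈ G.edgeFinset,
      Sym2.lift ⟨fun i j => a i + a j, fun i j => by ring⟩ e
        = ∑ v, if v ∈ e then a v else 0 := by
    intro e he
    have hd := SimpleGraph.not_isDiag_of_mem_edgeFinset he
    revert hd
    refine Sym2.inductionOn e fun i j => ?_
    intro hd
    have hij : i ≠ j := by simpa [Sym2.mk_isDiag_iff] using hd
    rw [Sym2.lift_mk]
    have hmem : ∀ v : Fin n, (if v ∈ s(i, j) then a v else 0)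
        = if v ∈ ({i, j} : Finset (Fin n)) then a v else 0 := by
      intro v
      simp [Sym2.mem_iff, Finset.mem_insert]
    simp_rw [hmem]
    rw [Finset.sum_ite_mem, Finset.univ_inter, Finset.sum_pair hij]
  rw [Finset.sum_congr rfl step1, Finset.sum_comm]
  refine Finset.sum_congr rfl fun v _ => ?_
  rw [← Finset.sum_filter, Finset.sum_const, ← SimpleGraph.incidenceFinset_eq_filter,
    SimpleGraph.card_incidenceFinset_eq_degree, nsmul_eq_mul]

theorem stmt17 (n d : ℕ) (G : SimpleGraph (Fin n)) [DecidableRel G.Adj]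
    (hreg : G.IsRegularOfDegree d)
    (w : Str n) (β : ℝ) :
    (mexp ((Complex.I * β) • mixer n) * MISop n G *
      mexp ((-(Complex.I * β)) • mixer n)) w w
      = ((Wgt n w - Kviol n G w
          + (d / 2) * (4 * Wgt n w - n) * Real.sin β ^ 4
          + (n - Wgt n w * (d + 2)) * Real.sin β ^ 2
          + Kviol n G w * Real.sin (2 * β) ^ 2 : ℝ)) := by
  classical
  set c : ℝ := Real.cos β with hc
  set s : ℝ := Real.sin β with hs
  -- the two exponentials
  have hU := mexp_mixer n β
  have hV : mexp ((-(Complex.I * β)) • mixer n)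
      = Matrix.of fun z z' => ∏ i, ub (c : ℂ) (-(Complex.I * s)) (z i) (z' i) := by
    have h := mexp_mixer n (-β)
    simp only [Complex.ofReal_neg, mul_neg, Real.cos_neg, Real.sin_neg] at h
    exact h
  rw [MISop_eq_diagonal, hU, hV, Matrix.mul_apply]
  simp_rw [Matrix.mul_diagonal, Matrix.of_apply]
  -- combine the products
  set p : Fin n → Bool → ℂ :=
    fun i b => ub (c : ℂ) (Complex.I * s) (w i) b * ub (c : ℂ) (-(Complex.I * s)) b (w i)
    with hpdef
  set q : Fin n → ℝ := fun i => if w i = true then 1 - s ^ 2 else s ^ 2 with hqdef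
  have hp : ∀ i b, p i b = ((if w i = b then 1 - s ^ 2 else s ^ 2 : ℝ) : ℂ) := by
    intro i b
    by_cases h : w i = b
    · simp only [hpdef, ub, if_pos h, if_pos h.symm, if_pos h]
      rw [← Complex.ofReal_mul]
      norm_cast
      have h1 := Real.sin_sq_add_cos_sq β
      rw [← hs, ← hc] at h1
      nlinarith [h1]
    · simp only [hpdef, ub, if_neg h, if_neg (show ¬ b = w i from fun hh => h hh.symm), if_neg h]
      have hI := Complex.I_mul_I
      push_cast
      linear_combination (-(s:ℂ)^2) * hI
  have hsum : ∀ i, p i true + p i false = 1 := by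
    intro i
    rw [hp, hp]
    cases hwi : w i <;> simp [hwi] <;> push_cast <;> ring
  have hqt : ∀ i, p i true = ((q i : ℝ) : ℂ) := by
    intro i
    rw [hp, hqdef]
  have hterm : ∀ z : Str n,
      (∏ i, ub (c : ℂ) (Complex.I * s) (w i) (z i))
        * ((Wgt n z - Kviol n G z : ℝ) : ℂ)
        * ∏ i, ub (c : ℂ) (-(Complex.I * s)) (z i) (w i)
      = ((Wgt n z : ℝ) : ℂ) * ∏ i, p i (z i)
        - ((Kviol n G z : ℝ) : ℂ) * ∏ i, p i (z i) := by
    intro z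
    rw [hpdef, Finset.prod_mul_distrib]
    push_cast
    ring
  rw [Finset.sum_congr rfl fun z _ => hterm z, Finset.sum_sub_distrib]
  -- the W part
  have hW : ∑ z : Str n, ((Wgt n z : ℝ) : ℂ) * ∏ i, p i (z i)
      = ((∑ i, q i : ℝ) : ℂ) := by
    push_cast [Wgt]
    simp_rw [Finset.sum_mul]
    rw [Finset.sum_comm]
    refine Finset.sum_congr rfl fun i _ => ?_
    rw [sum_bit_prod p hsum i, hqt]
  -- the K part
  have hK : ∑ z : Str n, ((Kviol n G z : ℝ) : ℂ) * ∏ i, p i (z i)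
      = ((∑ e ∈ G.edgeFinset,
          Sym2.lift ⟨fun i j => q i * q j, fun i j => by ring⟩ e : ℝ) : ℂ) := by
    push_cast [Kviol]
    simp_rw [Finset.sum_mul]
    rw [Finset.sum_comm]
    refine Finset.sum_congr rfl fun e he => ?_
    have hd := SimpleGraph.not_isDiag_of_mem_edgeFinset he
    revert hd
    refine Sym2.inductionOn e fun i j => ?_
    intro hd
    have hij : i ≠ j := by simpa [Sym2.mk_isDiag_iff] using hd
    simp only [Sym2.lift_mk]
    push_cast
    rw [← hqt i, ← hqt j, ← sum_bit2_prod p hsum i j hij]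
  rw [hW, hK]
  rw [← Complex.ofReal_sub]
  norm_cast
  -- now a real identity
  have hq' : ∀ i, q i = s ^ 2 + bitval (w i) * (1 - 2 * s ^ 2) := by
    intro i
    rw [hqdef]
    cases hwi : w i <;> simp [bitval, hwi] <;> ring
  have hA : ∑ i, q i = n * s ^ 2 + Wgt n w * (1 - 2 * s ^ 2) := by
    rw [Finset.sum_congr rfl fun i _ => hq' i, Finset.sum_add_distrib, Finset.sum_const,
      ← Finset.sum_mul, Finset.card_univ, Fintype.card_fin, nsmul_eq_mul, Wgt]
  have hBsplit : ∀ e ∈ G.edgeFinset,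
      Sym2.lift ⟨fun i j => q i * q j, fun i j => by ring⟩ e
      = s ^ 2 * s ^ 2 * Sym2.lift ⟨fun _ _ => (1 : ℝ), fun i j => rfl⟩ e
        + s ^ 2 * (1 - 2 * s ^ 2)
            * Sym2.lift ⟨fun i j => bitval (w i) + bitval (w j), fun i j => by ring⟩ e
        + (1 - 2 * s ^ 2) ^ 2
            * Sym2.lift ⟨fun i j => bitval (w i) * bitval (w j), fun i j => by ring⟩ e := by
    intro e _
    refine Sym2.inductionOn e fun i j => ?_
    simp only [Sym2.lift_mk]
    rw [hq' i, hq' j]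
    ring
  have hone : ∑ e ∈ G.edgeFinset, Sym2.lift ⟨fun _ _ => (1 : ℝ), fun i j => rfl⟩ e
      = (G.edgeFinset.card : ℝ) := by
    have h1 : ∀ e ∈ G.edgeFinset, Sym2.lift ⟨fun _ _ => (1 : ℝ), fun i j => rfl⟩ e = 1 :=
      fun e _ => Sym2.inductionOn e fun i j => by simp [Sym2.lift_mk]
    rw [Finset.sum_congr rfl h1, Finset.sum_const, nsmul_eq_mul, mul_one]
  have hadd : ∑ e ∈ G.edgeFinset,
      Sym2.lift ⟨fun i j => bitval (w i) + bitval (w j), fun i j => by ring⟩ e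
      = d * Wgt n w := by
    rw [sum_edge_add G (fun i => bitval (w i))]
    rw [Wgt, Finset.mul_sum]
    refine Finset.sum_congr rfl fun v _ => ?_
    rw [hreg v]
  have hcard : 2 * (G.edgeFinset.card : ℝ) = n * d := by
    have h := G.sum_degrees_eq_twice_card_edges
    have h2 : ∑ v : Fin n, G.degree v = n * d := by
      rw [Finset.sum_congr rfl fun v _ => hreg v, Finset.sum_const, Finset.card_univ,
        Fintype.card_fin, smul_eq_mul]
    rw [h2] at h
    exact_mod_cast h.symm
  have hE : (G.edgeFinset.card : ℝ) = n * d / 2 := by linarith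
  have hB : ∑ e ∈ G.edgeFinset,
      Sym2.lift ⟨fun i j => q i * q j, fun i j => by ring⟩ e
      = s ^ 2 * s ^ 2 * (n * d / 2) + s ^ 2 * (1 - 2 * s ^ 2) * (d * Wgt n w)
        + (1 - 2 * s ^ 2) ^ 2 * Kviol n G w := by
    rw [Finset.sum_congr rfl hBsplit, Finset.sum_add_distrib, Finset.sum_add_distrib,
      ← Finset.mul_sum, ← Finset.mul_sum, ← Finset.mul_sum, hone, hadd, hE, Kviol]
  have hsin2 : Real.sin (2 * β) ^ 2 = 4 * s ^ 2 * (1 - s ^ 2) := by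
    rw [Real.sin_two_mul, mul_pow, mul_pow, Real.cos_sq', ← hs]
    ring
  rw [hA, hB, hsin2]
  push_cast
  ring
end
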